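/- Let C and D be categories with terminal objects and J : C → D an identity-on-objects functor preserving the terminal object ⊤ of D. A fixpoint operator (-)* on D is uniform with respect to J if and only if the family of functions (-)*_A : Hom_D(J A, J A) → Hom_D(⊤, J A), indexed by objects A of C, is a strong dinatural transformation from the functor (A, B) ↦ Hom_D(J A, J B) to the functor (A, B) ↦ Hom_D(⊤, J B) (both functors Cᵒᵖ × C ⥤ Type, with first variable acting by precomposition with J of morphisms of C and second variable by postcomposition). -/

import Mathlib

open CategoryTheory CategoryTheory.Limits

/-- A strong dinatural transformation between functors `Cᵒᵖ × C ⥤ D`: a family of components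
`γ c : F.obj (c, c) ⟶ G.obj (c, c)` such that every wedge over `F` is carried to a
commuting hexagon. -/
def IsStrongDinatural {C : Type*} {D : Type*} [Category C] [Category D]
    (F G : Cᵒᵖ × C ⥤ D)
    (γ : ∀ c : C, F.obj (Opposite.op c, c) ⟶ G.obj (Opposite.op c, c)) : Prop :=
  ∀ {c d : C} (f : c ⟶ d) (Q : D)
    (qc : Q ⟶ F.obj (Opposite.op c, c)) (qd : Q ⟶ F.obj (Opposite.op d, d)),
    qc ≫ F.map ((𝟙 (Opposite.op c), f) :
        (Opposite.op c, c) ⟶ (Opposite.op c, d)) =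
      qd ≫ F.map ((f.op, 𝟙 d) : (Opposite.op d, d) ⟶ (Opposite.op c, d)) →
    qc ≫ γ c ≫ G.map ((𝟙 (Opposite.op c), f) :
        (Opposite.op c, c) ⟶ (Opposite.op c, d)) =
      qd ≫ γ d ≫ G.map ((f.op, 𝟙 d) : (Opposite.op d, d) ⟶ (Opposite.op c, d))

variable {C : Type*} {D : Type*} [Category C] [Category D]

/-- The functor `Cᵒᵖ × C ⥤ Type` sending `(A, B)` to `Hom_D(J A, J B)`. -/
def homJJ (J : C ⥤ D) : Cᵒᵖ × C ⥤ Type _ :=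
  (J.op.prod J) ⋙ Functor.hom D

/-- The functor `Cᵒᵖ × C ⥤ Type` sending `(A, B)` to `Hom_D(⊤, J B)`. -/
noncomputable def homTopJ [HasTerminal D] (J : C ⥤ D) : Cᵒᵖ × C ⥤ Type _ :=
  (((Functor.const Cᵒᵖ).obj (Opposite.op (⊤_ D))).prod J) ⋙ Functor.hom D

/-- Mulry's characterization: a fixpoint operator on `D` is uniform with respect to an
identity-on-objects (here: bijective-on-objects), terminal-object-preserving functor
`J : C ⥤ D` if and only if its components form a strong dinatural transformation from
`(A, B) ↦ Hom_D(J A, J B)` to `(A, B) ↦ Hom_D(⊤, J B)`. -/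
theorem uniform_iff_strongDinatural
    [HasTerminal C] [HasTerminal D]
    (J : C ⥤ D)
    (hJobj : Function.Bijective J.obj)
    (hJterm : IsTerminal (J.obj (⊤_ C)))
    (fix : ∀ X : D, (X ⟶ X) → ((⊤_ D) ⟶ X))
    (hfix : ∀ (X : D) (f : X ⟶ X), fix X f ≫ f = fix X f) :
    (∀ {A B : C} (s : A ⟶ B) (f : J.obj A ⟶ J.obj A) (g : J.obj B ⟶ J.obj B),
        f ≫ J.map s = J.map s ≫ g → fix (J.obj A) f ≫ J.map s = fix (J.obj B) g) ↔
    IsStrongDinatural (homJJ J) (homTopJ J) (fun A => TypeCat.ofHom (fix (J.obj A))) := by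
  constructor
  · intro h c d f Q qc qd hq
    ext x
    have hx := types_congr_hom hq x
    simp only [homJJ, homTopJ, Functor.comp_map, Functor.prod_map, Functor.hom,
      Functor.op_map, Functor.const_obj_map, types_comp_apply, Quiver.Hom.unop_op, unop_id,
      CategoryTheory.Functor.map_id, Category.id_comp, Category.comp_id] at hx ⊢
    erw [types_comp_apply, types_comp_apply] at hx
    simp only [TypeCat.ofHom_apply, Category.id_comp, Category.comp_id] at hx
    have key := h f (qc x) (qd x) (by
      have e : 𝟙 (J.obj c) ≫ (qc x : J.obj c ⟶ J.obj c) ≫ J.map f =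
          J.map f ≫ (qd x : J.obj d ⟶ J.obj d) ≫ 𝟙 (J.obj d) := hx
      rw [Category.id_comp] at e
      exact e.trans (congrArg (fun t => J.map f ≫ t) (Category.comp_id _)))
    refine (Category.id_comp (fix (J.obj c) (qc x : J.obj c ⟶ J.obj c) ≫ J.map f)).trans
      (key.trans ?_)
    exact ((Category.id_comp (fix (J.obj d) (qd x : J.obj d ⟶ J.obj d) ≫ 𝟙 (J.obj d))).trans
      (Category.comp_id _)).symm
  · intro h A B s f g hfg
    have := types_congr_hom (h s PUnit (TypeCat.ofHom fun _ => f) (TypeCat.ofHom fun _ => g) (by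
      ext x
      simp only [homJJ, Functor.comp_map, Functor.prod_map, Functor.hom,
        Functor.op_map, types_comp_apply, Quiver.Hom.unop_op, unop_id,
        CategoryTheory.Functor.map_id, Category.id_comp, Category.comp_id]
      simpa using hfg)) PUnit.unit
    erw [types_comp_apply, types_comp_apply, types_comp_apply, types_comp_apply] at this
    simp [homTopJ, Functor.hom] at this
    exact this
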